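/- Let Q be a finite poset with carrier Y, let P = C_2 × Q where C_2 = {0,1} is the two-element chain, let M_0 = {0} × Y and M_1 = {1} × Y, and let β : M_0 → M_1 send (0,y) to (1,y). Then for every down-set N of P|_{M_0}, the induced subposet P − (↑_P(M_0 \ N) ∪ ↓_P N) equals the induced subposet of P on β[N]. -/

import Mathlib

theorem stmt7 {β : Type*} [Fintype β] [PartialOrder β]
    (M₀ : Set (Fin 2 × β)) (hM₀ : M₀ = {p : Fin 2 × β | p.1 = 0})
    (N : Set (Fin 2 × β)) (hNM : N ⊆ M₀)
    (hN : ∀ x ∈ M₀, ∀ y ∈ N, x ≤ y → x ∈ N) :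
    ((upperClosure (M₀ \ N) : Set (Fin 2 × β)) ∪ (lowerClosure N : Set (Fin 2 × β)))ᶜ =
      (fun p : Fin 2 × β => ((1 : Fin 2), p.2)) '' N := by
  subst hM₀
  ext ⟨a, y⟩
  simp only [Set.mem_compl_iff, Set.mem_union, not_or, mem_upperClosure,
    mem_lowerClosure, Set.mem_diff, Set.mem_setOf_eq, Set.mem_image,
    Prod.mk.injEq, not_exists, not_and, Prod.le_def]
  constructor
  · rintro ⟨h1, h2⟩
    have hy : ((0 : Fin 2), y) ∈ N := by
      by_contra hc
      exact h1 ⟨(0, y), ⟨rfl, hc⟩, Fin.zero_le a, le_rfl⟩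
    have ha : a = 1 := by
      by_contra hc
      have ha0 : a = 0 := by omega
      exact h2 ⟨(0, y), hy, by simp [ha0]⟩
    exact ⟨(0, y), hy, ha.symm, rfl⟩
  · rintro ⟨⟨b, z⟩, hz, h1, h2⟩
    simp only at h1 h2
    subst h1 h2
    have hb : b = 0 := (hNM hz)
    subst hb
    refine ⟨?_, ?_⟩
    · rintro ⟨⟨c, w⟩, ⟨hc, hw⟩, hle⟩
      have hc0 : c = 0 := hc
      exact hw (hN (c, w) hc (0, z) hz ⟨by simp [hc0], hle.2⟩)
    · rintro ⟨⟨c, w⟩, hcw, hle⟩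
      have hc0 : c = 0 := hNM hcw
      have h1 : (1 : Fin 2) ≤ c := hle.1
      rw [hc0] at h1
      exact absurd h1 (by decide)
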